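/- Fix a positive integer m. Let R be a finite commutative ring with characteristic N, and let χ be a nontrivial additive character of R. Then | (1/|R|^m) · ∑_{h_1, ..., h_m ∈ R} χ(h_1 · h_2 ⋯ h_m) | ≤ (m−1)/lpf(N). -/

import Mathlib

set_option maxHeartbeats 1000000


open scoped BigOperators Classical

/-- `χ : R → ℂ` is an additive character: a homomorphism from `(R, +)` to the unit circle. -/
def IsAddCharFn {R : Type*} [AddGroup R] (χ : R → ℂ) : Prop :=
  (∀ x y, χ (x + y) = χ x * χ y) ∧ ∀ x, ‖χ x‖ = 1

section Aux

variable {R : Type*} [CommRing R]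

lemma addCharFn_ne_zero (χ : R → ℂ) (hχ : IsAddCharFn χ) (x : R) : χ x ≠ 0 := by
  intro h0
  have := hχ.2 x
  rw [h0] at this
  simp at this

lemma addCharFn_zero (χ : R → ℂ) (hχ : IsAddCharFn χ) : χ 0 = 1 := by
  have h : χ 0 * χ 0 = χ 0 * 1 := by
    rw [mul_one, ← hχ.1 0 0, add_zero]
  exact mul_left_cancel₀ (addCharFn_ne_zero χ hχ 0) h

/-- The annihilator ideal of an additive character. -/
def annIdeal (χ : R → ℂ) (hχ : IsAddCharFn χ) : Ideal R where
  carrier := {a | ∀ x, χ (a * x) = 1}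
  add_mem' := by
    intro a b ha hb x
    rw [add_mul, hχ.1, ha x, hb x, one_mul]
  zero_mem' := by
    intro x
    rw [zero_mul]
    exact addCharFn_zero χ hχ
  smul_mem' := by
    intro c a ha x
    have h : c • a * x = a * (c * x) := by
      rw [smul_eq_mul]; ring
    rw [h]
    exact ha (c * x)

lemma mem_annIdeal_iff (χ : R → ℂ) (hχ : IsAddCharFn χ) (a : R) :
    a ∈ annIdeal χ hχ ↔ ∀ x, χ (a * x) = 1 := Iff.rfl

variable [Fintype R]

lemma sum_addCharFn_mul (χ : R → ℂ) (hχ : IsAddCharFn χ) (a : R) :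
    ∑ x : R, χ (a * x) = if a ∈ annIdeal χ hχ then (Fintype.card R : ℂ) else 0 := by
  by_cases ha : a ∈ annIdeal χ hχ
  · rw [if_pos ha]
    rw [Finset.sum_congr rfl fun x _ => ha x]
    simp [Finset.card_univ]
  · rw [if_neg ha]
    obtain ⟨y, hy⟩ : ∃ y, χ (a * y) ≠ 1 := by
      by_contra h
      push_neg at h
      exact ha h
    have key : χ (a * y) * ∑ x : R, χ (a * x) = ∑ x : R, χ (a * x) := by
      rw [Finset.mul_sum]
      calc ∑ x : R, χ (a * y) * χ (a * x)
          = ∑ x : R, χ (a * ((Equiv.addLeft y) x)) := by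
            refine Finset.sum_congr rfl fun x _ => ?_
            simp only [Equiv.coe_addLeft]
            rw [mul_add, hχ.1]
        _ = ∑ x : R, χ (a * x) := Equiv.sum_comp (Equiv.addLeft y) fun x => χ (a * x)
    have h2 : (χ (a * y) - 1) * ∑ x : R, χ (a * x) = 0 := by
      rw [sub_mul, one_mul, key, sub_self]
    rcases mul_eq_zero.mp h2 with h | h
    · exact absurd (sub_eq_zero.mp h) hy
    · exact h

/-- Counting lemma: the number of tuples whose product lies in a prime ideal `M`, times the
cardinality of the quotient, is at most `k * |R|^k`. -/
lemma count_prod_mem_le (M : Ideal R) (hM : M.IsPrime) (k : ℕ) :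
    Fintype.card {g : Fin k → R // ∏ i, g i ∈ M} * Nat.card (R ⧸ M)
      ≤ k * Fintype.card R ^ k := by
  induction k with
  | zero =>
    have h0 : Fintype.card {g : Fin 0 → R // ∏ i, g i ∈ M} = 0 := by
      rw [Fintype.card_eq_zero_iff]
      constructor
      rintro ⟨g, hg⟩
      simp only [Finset.univ_eq_empty, Finset.prod_empty] at hg
      exact hM.ne_top ((Ideal.eq_top_iff_one M).mpr hg)
    rw [h0]
    simp
  | succ k ih =>
    have e1 : Fintype.card {g : Fin (k + 1) → R // ∏ i, g i ∈ M}
        = Fintype.card {p : R × (Fin k → R) // p.1 ∈ M ∨ ∏ i, p.2 i ∈ M} := by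
      refine Fintype.card_congr ((Fin.consEquiv fun _ => R).subtypeEquiv fun p => ?_).symm
      show (p.1 ∈ M ∨ ∏ i, p.2 i ∈ M) ↔ (∏ i, Fin.cons p.1 p.2 i ∈ M)
      rw [Fin.prod_cons]
      exact hM.mul_mem_iff_mem_or_mem.symm
    have e2 : Fintype.card {p : R × (Fin k → R) // p.1 ∈ M}
        = Nat.card M * Fintype.card R ^ k := by
      have e : {p : R × (Fin k → R) // p.1 ∈ M} ≃ {a : R // a ∈ M} × (Fin k → R) :=
        { toFun := fun p => (⟨p.1.1, p.2⟩, p.1.2)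
          invFun := fun q => ⟨(q.1.1, q.2), q.1.2⟩
          left_inv := fun p => rfl
          right_inv := fun q => rfl }
      rw [Fintype.card_congr e, Fintype.card_prod, Fintype.card_fun, Fintype.card_fin]
      congr 1
      exact Nat.card_eq_fintype_card.symm
    have e3 : Fintype.card {p : R × (Fin k → R) // ∏ i, p.2 i ∈ M}
        = Fintype.card R * Fintype.card {g : Fin k → R // ∏ i, g i ∈ M} := by
      have e : {p : R × (Fin k → R) // ∏ i, p.2 i ∈ M}
          ≃ R × {g : Fin k → R // ∏ i, g i ∈ M} :=
        { toFun := fun p => (p.1.1, ⟨p.1.2, p.2⟩)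
          invFun := fun q => ⟨(q.1, q.2.1), q.2.2⟩
          left_inv := fun p => rfl
          right_inv := fun q => rfl }
      rw [Fintype.card_congr e, Fintype.card_prod]
    have hunion : Fintype.card {p : R × (Fin k → R) // p.1 ∈ M ∨ ∏ i, p.2 i ∈ M}
        ≤ Fintype.card {p : R × (Fin k → R) // p.1 ∈ M}
          + Fintype.card {p : R × (Fin k → R) // ∏ i, p.2 i ∈ M} :=
      Fintype.card_subtype_or _ _
    have hmc : Nat.card M * Nat.card (R ⧸ M) = Fintype.card R := by
      have h := (Submodule.card_eq_card_quotient_mul_card M).symm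
      rw [h]
      exact Nat.card_eq_fintype_card
    calc Fintype.card {g : Fin (k + 1) → R // ∏ i, g i ∈ M} * Nat.card (R ⧸ M)
        ≤ (Nat.card M * Fintype.card R ^ k
            + Fintype.card R * Fintype.card {g : Fin k → R // ∏ i, g i ∈ M})
            * Nat.card (R ⧸ M) := by
          rw [e1]
          apply Nat.mul_le_mul_right
          rw [← e2, ← e3]
          exact hunion
      _ = Fintype.card R ^ (k + 1)
            + Fintype.card R
              * (Fintype.card {g : Fin k → R // ∏ i, g i ∈ M} * Nat.card (R ⧸ M)) := by
          rw [add_mul]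
          congr 1
          · rw [mul_right_comm, hmc, pow_succ']
          · rw [mul_assoc]
      _ ≤ Fintype.card R ^ (k + 1) + Fintype.card R * (k * Fintype.card R ^ k) := by
          exact Nat.add_le_add_left (Nat.mul_le_mul_left _ ih) _
      _ = (k + 1) * Fintype.card R ^ (k + 1) := by ring

end Aux

/-- **Proposition (multiplicative character sum estimate).** For a positive integer `m`, a
finite commutative ring `R` of characteristic `N`, and a nontrivial additive character `χ` of
`R`, one has `| (1/|R|^m) ∑_{h₁,…,hₘ} χ(h₁⋯hₘ) | ≤ (m−1)/lpf(N)`. -/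
theorem multiplicative_character_estimate
    (m : ℕ) (hm : 0 < m)
    (R : Type*) [CommRing R] [Fintype R] [Nontrivial R]
    (χ : R → ℂ) (hχ : IsAddCharFn χ) (hnontriv : ¬ ∀ x, χ x = 1) :
    ‖(1 / (Fintype.card R : ℂ) ^ m) * ∑ h : Fin m → R, χ (∏ i, h i)‖
      ≤ ((m : ℝ) - 1) / (Nat.minFac (ringChar R) : ℝ) := by
  obtain ⟨k, rfl⟩ : ∃ k, m = k + 1 := ⟨m - 1, (Nat.succ_pred_eq_of_pos hm).symm⟩
  -- the annihilator ideal is proper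
  have hann_ne_top : annIdeal χ hχ ≠ ⊤ := by
    intro htop
    apply hnontriv
    intro x
    have h1 : (1 : R) ∈ annIdeal χ hχ := htop ▸ Submodule.mem_top
    have := h1 x
    rwa [one_mul] at this
  obtain ⟨M, hMmax, hMle⟩ := Ideal.exists_le_maximal _ hann_ne_top
  have hMprime : M.IsPrime := hMmax.isPrime
  -- quotient field facts
  letI : Field (R ⧸ M) := Ideal.Quotient.field M
  set q := ringChar (R ⧸ M) with hq
  haveI : CharP (R ⧸ M) q := ringChar.charP _
  obtain ⟨n, hqprime, hcardq⟩ := FiniteField.card (R ⧸ M) q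
  -- minFac (ringChar R) ≤ Nat.card (R ⧸ M)
  have hqdvd : q ∣ ringChar R := by
    apply ringChar.dvd
    have : ((ringChar R : ℕ) : R) = 0 := ringChar.spec R (ringChar R) |>.mpr dvd_rfl
    calc ((ringChar R : ℕ) : R ⧸ M) = Ideal.Quotient.mk M ((ringChar R : ℕ) : R) := by
          rfl
      _ = 0 := by rw [this, map_zero]
  have hple : Nat.minFac (ringChar R) ≤ Nat.card (R ⧸ M) := by
    have h1 : Nat.minFac (ringChar R) ≤ q := Nat.minFac_le_of_dvd hqprime.two_le hqdvd
    have h2 : q ≤ Fintype.card (R ⧸ M) := by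
      rw [hcardq]
      exact Nat.le_self_pow (by positivity) q
    rw [Nat.card_eq_fintype_card]
    omega
  -- evaluate the sum
  set r := Fintype.card R with hr
  have hrpos : 0 < r := Fintype.card_pos
  set a := Fintype.card {g : Fin k → R // ∏ i, g i ∈ annIdeal χ hχ} with ha
  have hsum : ∑ h : Fin (k + 1) → R, χ (∏ i, h i) = (a : ℂ) * r := by
    calc ∑ h : Fin (k + 1) → R, χ (∏ i, h i)
        = ∑ p : R × (Fin k → R), χ (∏ i, (Fin.consEquiv fun _ => R) p i) :=
          (Equiv.sum_comp (Fin.consEquiv fun _ => R) fun h => χ (∏ i, h i)).symm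
      _ = ∑ p : R × (Fin k → R), χ ((∏ i, p.2 i) * p.1) := by
          refine Finset.sum_congr rfl fun p _ => ?_
          show χ (∏ i : Fin (k + 1), (Fin.cons p.1 p.2 : Fin (k + 1) → R) i) = _
          rw [Fin.prod_cons, mul_comm]
      _ = ∑ g : Fin k → R, ∑ x : R, χ ((∏ i, g i) * x) := by
          rw [← Finset.univ_product_univ]
          exact Finset.sum_product_right' Finset.univ Finset.univ
            fun (x : R) (g : Fin k → R) => χ ((∏ i, g i) * x)
      _ = ∑ g : Fin k → R,
            (if (∏ i, g i) ∈ annIdeal χ hχ then (r : ℂ) else 0) := by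
          refine Finset.sum_congr rfl fun g _ => sum_addCharFn_mul χ hχ _
      _ = (a : ℂ) * r := by
          rw [← Finset.sum_filter, Finset.sum_const, nsmul_eq_mul]
          congr 2
          rw [ha, Fintype.card_subtype]
  -- bound the count
  have hcount : a * Nat.minFac (ringChar R) ≤ k * r ^ k := by
    have hsubset : a ≤ Fintype.card {g : Fin k → R // ∏ i, g i ∈ M} := by
      apply Fintype.card_le_of_injective
        (fun g => ⟨g.1, hMle g.2⟩)
      intro g₁ g₂ h
      simp only [Subtype.mk.injEq] at h
      exact Subtype.ext h
    calc a * Nat.minFac (ringChar R)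
        ≤ Fintype.card {g : Fin k → R // ∏ i, g i ∈ M} * Nat.card (R ⧸ M) :=
          Nat.mul_le_mul hsubset hple
      _ ≤ k * r ^ k := count_prod_mem_le M hMprime k
  -- conclude
  have habs : ‖(1 / (r : ℂ) ^ (k + 1)) * ∑ h : Fin (k + 1) → R, χ (∏ i, h i)‖
      = (a : ℝ) / (r : ℝ) ^ k := by
    rw [hsum]
    rw [norm_mul, norm_div, norm_one, norm_pow, norm_mul]
    rw [Complex.norm_natCast, Complex.norm_natCast]
    rw [pow_succ]
    field_simp
  rw [habs]
  have hppos : (0 : ℝ) < (Nat.minFac (ringChar R) : ℝ) := by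
    exact_mod_cast Nat.minFac_pos _
  have hrkpos : (0 : ℝ) < (r : ℝ) ^ k := by positivity
  rw [div_le_div_iff₀ hrkpos hppos]
  have : ((k : ℝ) + 1) - 1 = (k : ℝ) := by ring
  push_cast
  rw [this]
  calc (a : ℝ) * (Nat.minFac (ringChar R) : ℝ) = ((a * Nat.minFac (ringChar R) : ℕ) : ℝ) := by
        push_cast; ring
    _ ≤ ((k * r ^ k : ℕ) : ℝ) := by exact_mod_cast hcount
    _ = (k : ℝ) * (r : ℝ) ^ k := by push_cast; ring
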